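/- A polynomial P(X) of degree ≤ 5 satisfies P(X)² ≡ (quadratic) (mod F(X)) if and only if, writing π_j = P(θ_j)/ω_j, the three equations Σ_j θ_j^i ω_j π_j² = 0 hold for i = 0, 1, 2. Equivalently, writing C(X) ≡ P(X)² mod F(X) with deg C ≤ 5, the coefficients of X⁵, X⁴, X³ in C vanish iff Σ_j θ_j^i ω_j π_j² = 0 for i = 0,1,2 (assuming f₆ = 1). -/

import Mathlib

open Polynomial

/-- for monic `F` (`f₆ = 1`) and `deg P ≤ 5`, `P²` is congruent to a quadratic
mod `F` iff `Σ_j θ_j^i ω_j π_j² = 0` for `i = 0,1,2`; equivalently, the coefficients of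
`X⁵, X⁴, X³` in `C = P² mod F` vanish iff these three equations hold. -/
theorem stmt6 {K : Type*} [Field K] (hchar : (2 : K) ≠ 0)
    (θ : Fin 6 → K) (hθ : Function.Injective θ)
    (F : K[X]) (hF : F = ∏ i, (X - C (θ i)))
    (ω : Fin 6 → K) (hω : ∀ j, ω j = ∏ i ∈ Finset.univ.filter (· ≠ j), (θ j - θ i))
    (P : K[X]) (hP : P.degree ≤ 5)
    (π : Fin 6 → K) (hπ : ∀ j, π j = P.eval (θ j) / ω j) :
    ((∃ Q : K[X], Q.degree ≤ 2 ∧ F ∣ P ^ 2 - Q) ↔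
        ∀ i : Fin 3, ∑ j, θ j ^ (i : ℕ) * ω j * π j ^ 2 = 0) ∧
      (((P ^ 2 %ₘ F).coeff 5 = 0 ∧ (P ^ 2 %ₘ F).coeff 4 = 0 ∧ (P ^ 2 %ₘ F).coeff 3 = 0) ↔
        ∀ i : Fin 3, ∑ j, θ j ^ (i : ℕ) * ω j * π j ^ 2 = 0) := by
  classical
  -- ω is the product over the erase
  have hωe : ∀ j, ω j = ∏ i ∈ Finset.univ.erase j, (θ j - θ i) := by
    intro j; rw [hω j]
    congr 1
    ext i
    simp [Finset.mem_erase, and_comm]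
  have hωne : ∀ j, ω j ≠ 0 := fun j => by
    rw [hωe j]
    exact Finset.prod_ne_zero_iff.2 fun i hi =>
      sub_ne_zero_of_ne fun h => (Finset.mem_erase.1 hi).1 (hθ h).symm
  -- F is monic of degree 6
  have hFmonic : F.Monic := by
    rw [hF]; exact monic_prod_of_monic _ _ fun i _ => monic_X_sub_C _
  have hFdeg : F.degree = 6 := by
    rw [hF, degree_prod]
    simp [degree_X_sub_C]
  -- N j := product over i ≠ j
  set N : Fin 6 → K[X] := fun j => ∏ i ∈ Finset.univ.erase j, (X - C (θ i)) with hN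
  have hFfac : ∀ j, F = (X - C (θ j)) * N j := fun j => by
    rw [hF, ← Finset.mul_prod_erase _ _ (Finset.mem_univ j)]
  have hNmonic : ∀ j, (N j).Monic := fun j =>
    monic_prod_of_monic _ _ fun i _ => monic_X_sub_C _
  have hNdeg : ∀ j, (N j).natDegree = 5 := fun j => by
    rw [hN, natDegree_prod_of_monic _ _ fun i _ => monic_X_sub_C _]
    simp [natDegree_X_sub_C]
  have hN5 : ∀ j, (N j).coeff 5 = 1 := fun j => by
    have := (hNmonic j).leadingCoeff
    rwa [leadingCoeff, hNdeg j] at this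
  have hFroot : ∀ j, F.eval (θ j) = 0 := fun j => by
    rw [hFfac j]; simp
  -- coefficient recursions: N.coeff k = F.coeff (k+1) + θ j * N.coeff (k+1)
  have hNrec : ∀ j k, (N j).coeff k = F.coeff (k + 1) + θ j * (N j).coeff (k + 1) := by
    intro j k
    have h : X * N j = F + C (θ j) * N j := by
      rw [hFfac j]; ring
    have := congrArg (fun p : K[X] => p.coeff (k + 1)) h
    simpa [coeff_X_mul, coeff_C_mul] using this
  have hN4 : ∀ j, (N j).coeff 4 = F.coeff 5 + θ j := fun j => by
    have := hNrec j 4; rwa [hN5 j, mul_one] at this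
  have hN3 : ∀ j, (N j).coeff 3 = F.coeff 4 + θ j * (F.coeff 5 + θ j) := fun j => by
    have := hNrec j 3; rwa [hN4 j] at this
  -- G = P^2 mod F
  set G : K[X] := P ^ 2 %ₘ F with hG
  have hGdeg : G.degree < 6 := by
    have := degree_modByMonic_lt (P ^ 2) hFmonic
    rwa [hFdeg] at this
  have hGeval : ∀ j, G.eval (θ j) = P.eval (θ j) ^ 2 := fun j => by
    rw [hG, modByMonic_eq_sub_mul_div _ F]
    simp [hFroot j]
  -- Lagrange interpolation for G
  have hinj : Set.InjOn θ (Finset.univ : Finset (Fin 6)) := hθ.injOn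
  have hGlt : G.degree < (Finset.univ : Finset (Fin 6)).card := by
    simpa using hGdeg
  have hLag : G = ∑ j, Polynomial.C (G.eval (θ j)) * Lagrange.basis Finset.univ θ j := by
    have := Lagrange.eq_interpolate hinj hGlt
    rwa [Lagrange.interpolate_apply] at this
  -- basis in terms of N
  have hbasis : ∀ j, Lagrange.basis Finset.univ θ j = C (ω j)⁻¹ * N j := by
    intro j
    rw [Lagrange.basis, hωe j]
    rw [show ∀ s : Finset (Fin 6), ∏ i ∈ s, Lagrange.basisDivisor (θ j) (θ i)
        = C (∏ i ∈ s, (θ j - θ i))⁻¹ * ∏ i ∈ s, (X - C (θ i)) from ?_]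
    intro s
    simp only [Lagrange.basisDivisor]
    rw [Finset.prod_mul_distrib, ← map_prod, ← Finset.prod_inv_distrib]
  -- coefficient formula
  have hcoeff : ∀ k, G.coeff k = ∑ j, G.eval (θ j) * (ω j)⁻¹ * (N j).coeff k := by
    intro k
    conv_lhs => rw [hLag]
    rw [finset_sum_coeff]
    refine Finset.sum_congr rfl fun j _ => ?_
    rw [hbasis j]
    simp [coeff_C_mul, mul_assoc]
  -- the three sums
  set A : ℕ → K := fun i => ∑ j, θ j ^ i * (G.eval (θ j) * (ω j)⁻¹) with hA
  have hsum : ∀ i : ℕ, (∑ j, θ j ^ i * ω j * π j ^ 2) = A i := by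
    intro i
    simp only [hA]
    refine Finset.sum_congr rfl fun j _ => ?_
    rw [hπ j, hGeval j]
    field_simp [hωne j]
  have hc5 : G.coeff 5 = A 0 := by
    rw [hcoeff 5]
    refine Finset.sum_congr rfl fun j _ => ?_
    rw [hN5 j]; ring
  have hc4 : G.coeff 4 = F.coeff 5 * A 0 + A 1 := by
    rw [hcoeff 4]; simp only [hA]
    rw [Finset.mul_sum, ← Finset.sum_add_distrib]
    refine Finset.sum_congr rfl fun j _ => ?_
    rw [hN4 j]; ring
  have hc3 : G.coeff 3 = F.coeff 4 * A 0 + F.coeff 5 * A 1 + A 2 := by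
    rw [hcoeff 3]; simp only [hA]
    simp only [Finset.mul_sum]
    rw [← Finset.sum_add_distrib, ← Finset.sum_add_distrib]
    refine Finset.sum_congr rfl fun j _ => ?_
    rw [hN3 j]; ring
  -- the key equivalence (second part)
  have key : ((G.coeff 5 = 0 ∧ G.coeff 4 = 0 ∧ G.coeff 3 = 0) ↔
      ∀ i : Fin 3, ∑ j, θ j ^ (i : ℕ) * ω j * π j ^ 2 = 0) := by
    constructor
    · rintro ⟨h5, h4, h3⟩
      have hA0 : A 0 = 0 := by rw [← hc5]; exact h5
      have hA1 : A 1 = 0 := by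
        have := hc4; rw [h4, hA0, mul_zero, zero_add] at this; exact this.symm
      have hA2 : A 2 = 0 := by
        have := hc3; rw [h3, hA0, hA1, mul_zero, mul_zero, zero_add, zero_add] at this
        exact this.symm
      intro i
      fin_cases i <;> simp only [hsum] <;> assumption
    · intro h
      have hA0 : A 0 = 0 := by rw [← hsum 0]; exact h 0
      have hA1 : A 1 = 0 := by rw [← hsum 1]; exact h 1
      have hA2 : A 2 = 0 := by rw [← hsum 2]; exact h 2
      refine ⟨by rw [hc5]; exact hA0, by rw [hc4, hA0, hA1]; ring,
        by rw [hc3, hA0, hA1, hA2]; ring⟩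
  refine ⟨?_, key⟩
  constructor
  · rintro ⟨Q, hQdeg, hdvd⟩
    have hQmod : Q %ₘ F = Q :=
      (modByMonic_eq_self_iff hFmonic).2 (lt_of_le_of_lt hQdeg (by rw [hFdeg]; norm_num))
    have hzero : (P ^ 2 - Q) %ₘ F = 0 := (modByMonic_eq_zero_iff_dvd hFmonic).2 hdvd
    have hGQ : G = Q := by
      have h1 := hzero
      rw [sub_modByMonic, sub_eq_zero, hQmod] at h1
      exact h1
    rw [← key, hGQ]
    refine ⟨?_, ?_, ?_⟩ <;>
      exact coeff_eq_zero_of_degree_lt (lt_of_le_of_lt hQdeg (by norm_num))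
  · intro h
    refine ⟨G, ?_, ?_⟩
    · -- degree G ≤ 2 since coeff 5,4,3 vanish and degree < 6
      obtain ⟨h5, h4, h3⟩ := key.2 h
      rw [degree_le_iff_coeff_zero]
      intro m hm
      have hm3 : 3 ≤ m := by exact_mod_cast hm
      by_cases h6 : 6 ≤ m
      · exact coeff_eq_zero_of_degree_lt (lt_of_lt_of_le hGdeg (by exact_mod_cast h6))
      · interval_cases m <;> assumption
    · refine ⟨P ^ 2 /ₘ F, ?_⟩
      have h1 := modByMonic_add_div (P ^ 2) F
      rw [hG]
      exact sub_eq_iff_eq_add'.mpr h1.symm
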